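/- Let W be a unitary n×n complex matrix, and let D = ∑_{j=1}^r α_j P_j with P_1,...,P_r pairwise orthogonal projections summing to 1_n and α_1,...,α_r distinct points of the closed unit disk. Set s := min_{j≠k} |α_j − α_k| and X := ∑_j P_j W P_j. Then ‖W − X‖ ≤ (r(r−1)/s)·‖W D W* − D‖. -/

import Mathlib

open Matrix
open scoped Matrix.Norms.L2Operator

private lemma proj_norm_le_one {n : ℕ} (P : Matrix (Fin n) (Fin n) ℂ)
    (h1 : P.IsHermitian) (h2 : P * P = P) : ‖P‖ ≤ 1 := by
  have hstar : ‖star P * P‖ = ‖P‖ * ‖P‖ := CStarRing.norm_star_mul_self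
  rw [Matrix.star_eq_conjTranspose, h1.eq, h2] at hstar
  nlinarith [norm_nonneg P]

/-- Estimate for the distance from a unitary `W` to its block-diagonal
compression `X = ∑ⱼ Pⱼ W Pⱼ`. -/
theorem block_compression_estimate {n r : ℕ}
    (W : Matrix (Fin n) (Fin n) ℂ) (hW : W ∈ Matrix.unitaryGroup (Fin n) ℂ)
    (α : Fin r → ℂ) (hα : Function.Injective α) (hαdisk : ∀ j, ‖α j‖ ≤ 1)
    (P : Fin r → Matrix (Fin n) (Fin n) ℂ)
    (hPproj : ∀ j, (P j).IsHermitian ∧ P j * P j = P j)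
    (hPorth : ∀ j k, j ≠ k → P j * P k = 0)
    (hPsum : ∑ j, P j = 1)
    (D : Matrix (Fin n) (Fin n) ℂ) (hD : D = ∑ j, α j • P j)
    (s : ℝ) (hs0 : 0 < s) (hs : ∀ j k, j ≠ k → s ≤ ‖α j - α k‖)
    (X : Matrix (Fin n) (Fin n) ℂ) (hX : X = ∑ j, P j * W * P j) :
    ‖W - X‖ ≤ ((r * (r - 1) : ℕ) : ℝ) / s * ‖W * D * Wᴴ - D‖ := by
  set E := W * D * Wᴴ - D with hE
  have hWH : Wᴴ * W = 1 := by
    have := (Matrix.mem_unitaryGroup_iff'.mp hW)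
    rwa [Matrix.star_eq_conjTranspose] at this
  have hnormP : ∀ j, ‖P j‖ ≤ 1 := fun j =>
    proj_norm_le_one _ (hPproj j).1 (hPproj j).2
  have hnormW : ‖W‖ ≤ 1 := by
    have hstar : ‖star W * W‖ = ‖W‖ * ‖W‖ := CStarRing.norm_star_mul_self
    rw [Matrix.star_eq_conjTranspose, hWH] at hstar
    have h1 : ‖(1 : Matrix (Fin n) (Fin n) ℂ)‖ ≤ 1 :=
      proj_norm_le_one _ Matrix.isHermitian_one (one_mul 1)
    nlinarith [norm_nonneg W]
  have hDP : ∀ k, D * P k = α k • P k := by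
    intro k
    rw [hD, Finset.sum_mul]
    rw [Finset.sum_eq_single k]
    · rw [smul_mul_assoc, (hPproj k).2]
    · intro m _ hm
      rw [smul_mul_assoc, hPorth m k hm, smul_zero]
    · intro h; exact absurd (Finset.mem_univ k) h
  have hPD : ∀ j, P j * D = α j • P j := by
    intro j
    rw [hD, Finset.mul_sum]
    rw [Finset.sum_eq_single j]
    · rw [mul_smul_comm, (hPproj j).2]
    · intro m _ hm
      rw [mul_smul_comm, hPorth j m hm.symm, smul_zero]
    · intro h; exact absurd (Finset.mem_univ j) h
  have key : ∀ j k, j ≠ k → ‖P j * W * P k‖ ≤ ‖E‖ / s := by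
    intro j k hjk
    have hEW : E * W = W * D - D * W := by
      rw [hE, sub_mul, mul_assoc (W * D) Wᴴ W, hWH, mul_one]
    have h1 : P j * (E * W) * P k = (α k - α j) • (P j * W * P k) := by
      rw [hEW, mul_sub, sub_mul]
      have ha : P j * (W * D) * P k = α k • (P j * W * P k) := by
        rw [mul_assoc (P j) (W * D) (P k), mul_assoc W D (P k), hDP k,
          mul_smul_comm, mul_smul_comm, ← mul_assoc]
      have hb : P j * (D * W) * P k = α j • (P j * W * P k) := by
        rw [← mul_assoc (P j) D W, hPD j, smul_mul_assoc, smul_mul_assoc]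
      rw [ha, hb, sub_smul]
    have h2 : ‖P j * (E * W) * P k‖ ≤ ‖E‖ := by
      have t1 : ‖P j * (E * W) * P k‖ ≤ ‖P j * (E * W)‖ * ‖P k‖ :=
        norm_mul_le _ _
      have t2 : ‖P j * (E * W)‖ ≤ ‖P j‖ * ‖E * W‖ := norm_mul_le _ _
      have t3 : ‖E * W‖ ≤ ‖E‖ * ‖W‖ := norm_mul_le _ _
      nlinarith [norm_nonneg (P j), norm_nonneg (P k), norm_nonneg (E * W),
        norm_nonneg E, norm_nonneg W, hnormP j, hnormP k, hnormW,
        norm_nonneg (P j * (E * W))]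
    have h3 : ‖α k - α j‖ * ‖P j * W * P k‖ ≤ ‖E‖ := by
      rw [← norm_smul, ← h1]; exact h2
    have hskj : s ≤ ‖α k - α j‖ := hs k j hjk.symm
    rw [le_div_iff₀ hs0]
    calc ‖P j * W * P k‖ * s ≤ ‖P j * W * P k‖ * ‖α k - α j‖ := by
          exact mul_le_mul_of_nonneg_left hskj (norm_nonneg _)
      _ = ‖α k - α j‖ * ‖P j * W * P k‖ := mul_comm _ _
      _ ≤ ‖E‖ := h3
  have hdecomp : W - X = ∑ j, ∑ k ∈ Finset.univ.erase j, P j * W * P k := by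
    have hW1 : W = ∑ j, ∑ k, P j * W * P k := by
      calc W = (∑ j, P j) * W * (∑ k, P k) := by rw [hPsum]; simp
        _ = ∑ j, ∑ k, P j * W * P k := by
            rw [Finset.sum_mul, Finset.sum_mul]
            exact Finset.sum_congr rfl fun j _ => Finset.mul_sum _ _ _
    rw [hX]
    symm
    calc ∑ j, ∑ k ∈ Finset.univ.erase j, P j * W * P k
        = ∑ j : Fin r, (∑ k, P j * W * P k - P j * W * P j) :=
          Finset.sum_congr rfl fun j _ =>
            Finset.sum_erase_eq_sub (Finset.mem_univ j)
      _ = W - ∑ j, P j * W * P j := by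
          rw [Finset.sum_sub_distrib, ← hW1]
  calc ‖W - X‖ = ‖∑ j, ∑ k ∈ Finset.univ.erase j, P j * W * P k‖ := by
        rw [hdecomp]
    _ ≤ ∑ j, ‖∑ k ∈ Finset.univ.erase j, P j * W * P k‖ :=
        norm_sum_le _ _
    _ ≤ ∑ j : Fin r, ∑ k ∈ Finset.univ.erase j, ‖P j * W * P k‖ :=
        Finset.sum_le_sum fun j _ => norm_sum_le _ _
    _ ≤ ∑ j : Fin r, ∑ k ∈ Finset.univ.erase j, ‖E‖ / s :=
        Finset.sum_le_sum fun j _ => Finset.sum_le_sum fun k hk =>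
          key j k (Finset.ne_of_mem_erase hk).symm
    _ = ((r * (r - 1) : ℕ) : ℝ) / s * ‖E‖ := by
        simp only [Finset.sum_const, Finset.card_erase_of_mem (Finset.mem_univ _),
          Finset.card_univ, Fintype.card_fin, nsmul_eq_mul]
        push_cast [Nat.cast_sub]
        rcases Nat.eq_zero_or_pos r with hr | hr
        · subst hr; simp
        · rw [Nat.cast_sub hr]
          push_cast
          ring
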